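/- Let G be a Lie groupoid with Lie algebroid 𝔤. Every multiplicative vector field W on G induces a derivation (ℒ_W, W|_{G₀}) on 𝔤, where ℒ_W(X) = [W, X] under the identification Γ(𝔤) ≅ 𝔛^α_inv(G), and the resulting map ℒ : 𝔛^μ(G) → Der(𝔤) is a homomorphism of Lie algebras. -/

import Mathlib

open scoped Manifold

local notation "∞" => (⊤ : ℕ∞)

section LieGroupoid

/- A Lie groupoid `G`:  `G₀` is the manifold of objects, `G₁` the manifold of arrows, and `P`
the manifold of composable pairs of arrows (the fibered product `G₁ ×_{G₀} G₁`, with its two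
projections `p₁, p₂` and the multiplication `μ`).  Vector fields on a manifold are represented
as derivations of the algebra of smooth functions. -/
variable {E₀ : Type*} [NormedAddCommGroup E₀] [NormedSpace ℝ E₀] {H₀ : Type*}
  [TopologicalSpace H₀] {I₀ : ModelWithCorners ℝ E₀ H₀} {G₀ : Type*} [TopologicalSpace G₀]
  [ChartedSpace H₀ G₀]
  {E₁ : Type*} [NormedAddCommGroup E₁] [NormedSpace ℝ E₁] {H₁ : Type*}
  [TopologicalSpace H₁] {I₁ : ModelWithCorners ℝ E₁ H₁} {G₁ : Type*} [TopologicalSpace G₁]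
  [ChartedSpace H₁ G₁]
  {E₂ : Type*} [NormedAddCommGroup E₂] [NormedSpace ℝ E₂] {H₂ : Type*}
  [TopologicalSpace H₂] {I₂ : ModelWithCorners ℝ E₂ H₂} {P : Type*} [TopologicalSpace P]
  [ChartedSpace H₂ P]

/-- A vector field `X` on the manifold `G₁` of arrows is `α`-vertical if `dα ∘ X = 0`,
i.e. `X` kills all functions pulled back along the source map `α`. -/
def IsAlphaVertical (α : C^∞⟮I₁, G₁; I₀, G₀⟯)
    (X : Derivation ℝ C^∞⟮I₁, G₁; ℝ⟯ C^∞⟮I₁, G₁; ℝ⟯) : Prop :=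
  ∀ f : C^∞⟮I₀, G₀; ℝ⟯, X (f.comp α) = 0

/-- A vector field `X` on `G₁` is right invariant if the vector field `(X, 0)` on the manifold
`P` of composable pairs is projectable to `X` along the multiplication `μ`:  there is a vector
field `Ξ` on `P` which is `p₁`-related to `X`, `p₂`-related to `0` and `μ`-related to `X`. -/
def IsRightInvariant (p₁ p₂ μ : C^∞⟮I₂, P; I₁, G₁⟯)
    (X : Derivation ℝ C^∞⟮I₁, G₁; ℝ⟯ C^∞⟮I₁, G₁; ℝ⟯) : Prop :=
  ∃ Ξ : Derivation ℝ C^∞⟮I₂, P; ℝ⟯ C^∞⟮I₂, P; ℝ⟯,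
    (∀ f : C^∞⟮I₁, G₁; ℝ⟯, Ξ (f.comp p₁) = (X f).comp p₁) ∧
    (∀ f : C^∞⟮I₁, G₁; ℝ⟯, Ξ (f.comp p₂) = 0) ∧
    (∀ f : C^∞⟮I₁, G₁; ℝ⟯, Ξ (f.comp μ) = (X f).comp μ)

/-- A multiplicative vector field on the Lie groupoid `G` is a pair of vector fields `W` on `G₁`
and `W₀` on `G₀` such that `W` is projectable to `W₀` along both `α` and `β`, `W₀` is projectable
to `W` along the unit map, and `(W, W)` on the manifold of composable pairs is projectable to `W`
along the multiplication `μ`. -/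
def IsMultiplicative (α β : C^∞⟮I₁, G₁; I₀, G₀⟯) (uni : C^∞⟮I₀, G₀; I₁, G₁⟯)
    (p₁ p₂ μ : C^∞⟮I₂, P; I₁, G₁⟯)
    (W : Derivation ℝ C^∞⟮I₁, G₁; ℝ⟯ C^∞⟮I₁, G₁; ℝ⟯)
    (W₀ : Derivation ℝ C^∞⟮I₀, G₀; ℝ⟯ C^∞⟮I₀, G₀; ℝ⟯) : Prop :=
  (∀ f : C^∞⟮I₀, G₀; ℝ⟯, W (f.comp α) = (W₀ f).comp α) ∧
  (∀ f : C^∞⟮I₀, G₀; ℝ⟯, W (f.comp β) = (W₀ f).comp β) ∧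
  (∀ f : C^∞⟮I₁, G₁; ℝ⟯, W₀ (f.comp uni) = (W f).comp uni) ∧
  (∃ Ω : Derivation ℝ C^∞⟮I₂, P; ℝ⟯ C^∞⟮I₂, P; ℝ⟯,
    (∀ f : C^∞⟮I₁, G₁; ℝ⟯, Ω (f.comp p₁) = (W f).comp p₁) ∧
    (∀ f : C^∞⟮I₁, G₁; ℝ⟯, Ω (f.comp p₂) = (W f).comp p₂) ∧
    (∀ f : C^∞⟮I₁, G₁; ℝ⟯, Ω (f.comp μ) = (W f).comp μ))

/-- Every multiplicative vector field `(W, W₀)` on a Lie groupoid `G` induces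
a derivation `ℒ(W) = (ℒ_W, W₀)` on the Lie algebroid `𝔤` of `G`, whose sections are the right
invariant `α`-vertical vector fields on `G₁` with module structure `f • X = (f ∘ β) • X` and
anchor given by projecting along `β`; moreover `ℒ` is a homomorphism of Lie algebras. -/
theorem statement9
    (α β : C^∞⟮I₁, G₁; I₀, G₀⟯) (uni : C^∞⟮I₀, G₀; I₁, G₁⟯)
    (p₁ p₂ μ : C^∞⟮I₂, P; I₁, G₁⟯)
    (hP : ∀ p : P, α (p₁ p) = β (p₂ p))
    (hPuniv : ∀ g g' : G₁, α g = β g' → ∃! p : P, p₁ p = g ∧ p₂ p = g')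
    (hαuni : ∀ x, α (uni x) = x) (hβuni : ∀ x, β (uni x) = x)
    (hμα : ∀ p, α (μ p) = α (p₂ p)) (hμβ : ∀ p, β (μ p) = β (p₁ p))
    (W W' : Derivation ℝ C^∞⟮I₁, G₁; ℝ⟯ C^∞⟮I₁, G₁; ℝ⟯)
    (W₀ W₀' : Derivation ℝ C^∞⟮I₀, G₀; ℝ⟯ C^∞⟮I₀, G₀; ℝ⟯)
    (hW : IsMultiplicative α β uni p₁ p₂ μ W W₀)
    (hW' : IsMultiplicative α β uni p₁ p₂ μ W' W₀') :
    -- `ℒ_W = [W, −]` maps sections of `𝔤` to sections of `𝔤` ...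
    (∀ X, IsAlphaVertical α X → IsRightInvariant p₁ p₂ μ X →
      IsAlphaVertical α ⁅W, X⁆ ∧ IsRightInvariant p₁ p₂ μ ⁅W, X⁆) ∧
    -- ... is a derivation: condition (i) ...
    (∀ X X' : Derivation ℝ C^∞⟮I₁, G₁; ℝ⟯ C^∞⟮I₁, G₁; ℝ⟯, ⁅W, ⁅X, X'⁆⁆ = ⁅⁅W, X⁆, X'⁆ + ⁅X, ⁅W, X'⁆⁆) ∧
    -- ... condition (ii), with respect to the `C^∞(G₀)`-module structure `f • X = (f∘β) • X` ...
    (∀ (X : Derivation ℝ C^∞⟮I₁, G₁; ℝ⟯ C^∞⟮I₁, G₁; ℝ⟯) (f : C^∞⟮I₀, G₀; ℝ⟯),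
      ⁅W, f.comp β • X⁆ = f.comp β • ⁅W, X⁆ + (W₀ f).comp β • X) ∧
    -- ... and condition (iii): the anchor (projection along `β`) intertwines `ℒ_W` and `[W₀, −]`
    (∀ (X : Derivation ℝ C^∞⟮I₁, G₁; ℝ⟯ C^∞⟮I₁, G₁; ℝ⟯)
       (ρX : Derivation ℝ C^∞⟮I₀, G₀; ℝ⟯ C^∞⟮I₀, G₀; ℝ⟯),
      (∀ f : C^∞⟮I₀, G₀; ℝ⟯, X (f.comp β) = (ρX f).comp β) →
      ∀ f : C^∞⟮I₀, G₀; ℝ⟯, ⁅W, X⁆ (f.comp β) = (⁅W₀, ρX⁆ f).comp β) ∧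
    -- `ℒ` is a Lie algebra homomorphism: multiplicative fields are closed under brackets ...
    IsMultiplicative α β uni p₁ p₂ μ ⁅W, W'⁆ ⁅W₀, W₀'⁆ ∧
    -- ... and `ℒ_{[W,W']}` is the commutator of `ℒ_W` and `ℒ_{W'}`
    (∀ X : Derivation ℝ C^∞⟮I₁, G₁; ℝ⟯ C^∞⟮I₁, G₁; ℝ⟯, ⁅⁅W, W'⁆, X⁆ = ⁅W, ⁅W', X⁆⁆ - ⁅W', ⁅W, X⁆⁆) := by
  obtain ⟨hWα, hWβ, hWu, Ω, hΩ1, hΩ2, hΩ3⟩ := hW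
  obtain ⟨hW'α, hW'β, hW'u, Ω', hΩ'1, hΩ'2, hΩ'3⟩ := hW'
  refine ⟨?_, ?_, ?_, ?_, ?_, ?_⟩
  · intro X hv ⟨Ξ, hΞ1, hΞ2, hΞ3⟩
    have hv' : ∀ f : C^∞⟮I₀, G₀; ℝ⟯, X (f.comp α) = 0 := hv
    constructor
    · intro f
      simp only [Derivation.commutator_apply, hv', hWα, map_zero, zero_sub, neg_eq_zero]
    · refine ⟨⁅Ω, Ξ⁆, fun f => ?_, fun f => ?_, fun f => ?_⟩
      · simp only [Derivation.commutator_apply, hΞ1, hΩ1]; ext x; simp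
      · simp only [Derivation.commutator_apply, hΞ2, hΩ2, map_zero, zero_sub, neg_eq_zero]
      · simp only [Derivation.commutator_apply, hΞ3, hΩ3]; ext x; simp
  · intro X X'; rw [lie_lie W X X']; abel
  · intro X f
    apply Derivation.ext; intro h
    have h2 : W (f.comp β * X h) = f.comp β * W (X h) + X h * W (f.comp β) := by
      rw [Derivation.leibniz]; simp [smul_eq_mul]
    simp only [Derivation.commutator_apply, Derivation.add_apply, Derivation.smul_apply,
      smul_eq_mul, h2, hWβ]
    ring
  · intro X ρX hρ f
    simp only [Derivation.commutator_apply, hρ, hWβ]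
    ext x; simp
  · refine ⟨fun f => ?_, fun f => ?_, fun f => ?_, ⟨⁅Ω, Ω'⁆, fun f => ?_, fun f => ?_, fun f => ?_⟩⟩
    · simp only [Derivation.commutator_apply, hWα, hW'α]; ext x; simp
    · simp only [Derivation.commutator_apply, hWβ, hW'β]; ext x; simp
    · simp only [Derivation.commutator_apply, hWu, hW'u]; ext x; simp
    · simp only [Derivation.commutator_apply, hΩ1, hΩ'1]; ext x; simp
    · simp only [Derivation.commutator_apply, hΩ2, hΩ'2]; ext x; simp
    · simp only [Derivation.commutator_apply, hΩ3, hΩ'3]; ext x; simp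
  · intro X; exact lie_lie W W' X

end LieGroupoid
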